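/- For every k ≥ 2, the Fibonacci-plus word v = s_{2k}·b satisfies bwt(v) = b^{F_{2k-2}} · a^{F_{2k-1}-1} · b · a. In particular r(v) = 4. -/

import Mathlib

namespace BWT

/-- The two-letter ordered alphabet `{a, b}` with `a < b`, encoded as `Bool` with `a = false`. -/
abbrev Letter := Bool

/-- The letter `a`. -/
abbrev la : Letter := false

/-- The letter `b`. -/
abbrev lb : Letter := true

/-- A (binary) word. -/
abbrev Word := List Letter

/-- All conjugates (rotations) of a word, listed by rotation amount. -/
def rotations (w : Word) : List Word := (List.range w.length).map w.rotate

/-- A word is primitive if all of its `|w|` conjugates are distinct. -/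
def Primitive (w : Word) : Prop := (rotations w).Nodup

/-- The conjugates of `w`, sorted lexicographically. -/
def sortedRotations (w : Word) : List Word := (rotations w).insertionSort (· ≤ ·)

/-- The Burrows–Wheeler transform: last letters of the lexicographically sorted conjugates. -/
def bwt (w : Word) : Word := (sortedRotations w).map (fun u => u.getLastD la)

/-- Number of maximal equal-letter runs of a word. -/
def runs (w : Word) : ℕ := (w.destutter (· ≠ ·)).length

/-- `r(w)`: the number of runs of the BWT of `w`. -/
def rr (w : Word) : ℕ := runs (bwt w)

/-- The runs-ratio `ρ(w)`. -/
def rho (w : Word) : ℚ :=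
  max ((rr w : ℚ) / (rr w.reverse : ℚ)) ((rr w.reverse : ℚ) / (rr w : ℚ))

/-- `n`-th power (concatenation) of a word. -/
def wpow (w : Word) : ℕ → Word
  | 0 => []
  | n + 1 => w ++ wpow w n

/-- Standard words for the directive sequence `d`:
`s 0 = b`, `s 1 = a`, `s (i+2) = (s (i+1))^(d i) · s i`. -/
def std (d : ℕ → ℕ) : ℕ → Word
  | 0 => [lb]
  | 1 => [la]
  | n + 2 => wpow (std d (n + 1)) (d n) ++ std d n

/-- Fibonacci words: `s 0 = b`, `s 1 = a`, `s (i+2) = s (i+1) · s i`. -/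
def fw : ℕ → Word
  | 0 => [lb]
  | 1 => [la]
  | n + 2 => fw (n + 1) ++ fw n

/-- Fibonacci numbers with `F 0 = F 1 = 1`. -/
def fib : ℕ → ℕ
  | 0 => 1
  | 1 => 1
  | n + 2 => fib (n + 1) + fib n

/-- The word `x i`, i.e. the Fibonacci word of order `i` with its last two letters removed
(so that `s_{2k} = x_{2k}·ab` and `s_{2k+1} = x_{2k+1}·ba`). -/
def x (i : ℕ) : Word := (fw i).take ((fw i).length - 2)

/-- `u` is a circular factor of `w`: a prefix of some conjugate of `w`. -/
def CircFactor (u w : Word) : Prop := ∃ i < w.length, u <+: w.rotate i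

/-- A circular factor `u` is left-special in `w` if both `a·u` and `b·u` are circular factors. -/
def LeftSpecial (u w : Word) : Prop := CircFactor (la :: u) w ∧ CircFactor (lb :: u) w

/-- Number of occurrences of `u` as a circular factor of `w`. -/
def occ (u w : Word) : ℕ :=
  ((List.range w.length).filter (fun j => decide (u <+: w.rotate j))).length

end BWT

namespace SAux
open BWT

theorem fib_add_two (n : ℕ) : fib (n+2) = fib (n+1) + fib n := rfl

theorem fib_pos : ∀ n, 1 ≤ fib n
  | 0 => Nat.le_refl 1
  | 1 => Nat.le_refl 1
  | n+2 => by rw [fib_add_two]; have := fib_pos n; omega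

theorem fib_two_le (n : ℕ) : 2 ≤ fib (n+2) := by
  rw [fib_add_two]; have := fib_pos n; have := fib_pos (n+1); omega

theorem flen : ∀ n, (fw n).length = fib n
  | 0 => rfl
  | 1 => rfl
  | n+2 => by
      rw [show fw (n+2) = fw (n+1) ++ fw n from rfl, List.length_append,
        flen (n+1), flen n, fib_add_two]

theorem catalanZ : ∀ n, (fib (n+2) : ℤ) * fib n = (fib (n+1):ℤ)^2 + (-1)^n := by
  intro n
  induction n with
  | zero => norm_num [fib]
  | succ m ih =>
      have h2 : (fib (m+2):ℤ) = (fib (m+1):ℤ) + (fib m:ℤ) := by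
        rw [fib_add_two]; push_cast; ring
      have h3 : (fib (m+3):ℤ) = (fib (m+2):ℤ) + (fib (m+1):ℤ) := by
        rw [fib_add_two]; push_cast; ring
      rw [pow_succ, h3, h2]
      rw [h2] at ih
      linear_combination (-1 : ℤ) * ih

theorem dOcagneZ : ∀ n, (fib (n+2):ℤ) * fib (n+1) = (fib n:ℤ) * fib (n+3) - (-1)^n := by
  intro n
  induction n with
  | zero => norm_num [fib]
  | succ m ih =>
      have h2 : (fib (m+2):ℤ) = (fib (m+1):ℤ) + (fib m:ℤ) := by
        rw [fib_add_two]; push_cast; ring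
      have h3 : (fib (m+3):ℤ) = (fib (m+2):ℤ) + (fib (m+1):ℤ) := by
        rw [fib_add_two]; push_cast; ring
      have h4 : (fib (m+4):ℤ) = (fib (m+3):ℤ) + (fib (m+2):ℤ) := by
        rw [fib_add_two]; push_cast; ring
      rw [pow_succ, h4, h3, h2]
      rw [h3, h2] at ih
      linear_combination (-1 : ℤ) * ih

theorem dOc_even (m : ℕ) : fib (2*m+3) * fib (2*m+2) = fib (2*m+1) * fib (2*m+4) + 1 := by
  have h := dOcagneZ (2*m+1)
  rw [show ((-1:ℤ))^(2*m+1) = -1 from Odd.neg_one_pow ⟨m, by ring⟩] at h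
  norm_num [Nat.add_assoc] at h
  have h2 : (fib (2*m+3):ℤ) * fib (2*m+2) = (fib (2*m+1):ℤ) * fib (2*m+4) + 1 := by
    linarith
  exact_mod_cast h2

theorem dOc_odd (m : ℕ) : fib (2*m+2) * fib (2*m+5) = fib (2*m+4) * fib (2*m+3) + 1 := by
  have h := dOcagneZ (2*m+2)
  rw [show ((-1:ℤ))^(2*m+2) = 1 from Even.neg_one_pow ⟨m+1, by ring⟩] at h
  norm_num [Nat.add_assoc] at h
  have h2 : (fib (2*m+2):ℤ) * fib (2*m+5) = (fib (2*m+4):ℤ) * fib (2*m+3) + 1 := by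
    linarith
  exact_mod_cast h2

theorem C2_even (m : ℕ) : fib (2*m+2)^2 + 1 = fib (2*m) * fib (2*m+4) := by
  have hB := catalanZ (2*m+1)
  rw [show ((-1:ℤ))^(2*m+1) = -1 from Odd.neg_one_pow ⟨m, by ring⟩] at hB
  norm_num [Nat.add_assoc] at hB
  have e1 : (fib (2*m+2):ℤ) = (fib (2*m+1):ℤ) + (fib (2*m):ℤ) := by
    rw [fib_add_two]; push_cast; ring
  have e2 : (fib (2*m+3):ℤ) = (fib (2*m+2):ℤ) + (fib (2*m+1):ℤ) := by
    rw [fib_add_two]; push_cast; ring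
  have e3 : (fib (2*m+4):ℤ) = (fib (2*m+3):ℤ) + (fib (2*m+2):ℤ) := by
    rw [fib_add_two]; push_cast; ring
  have ha : (fib (2*m):ℤ) = (fib (2*m+2):ℤ) - (fib (2*m+1):ℤ) := by linarith
  have hd : (fib (2*m+4):ℤ) = 2 * (fib (2*m+2):ℤ) + (fib (2*m+1):ℤ) := by linarith
  have hB' : ((fib (2*m+2):ℤ) + (fib (2*m+1):ℤ)) * (fib (2*m+1):ℤ)
      = (fib (2*m+2):ℤ)^2 - 1 := by rw [← e2]; linarith
  have h2 : (fib (2*m+2):ℤ)^2 + 1 = (fib (2*m):ℤ) * fib (2*m+4) := by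
    rw [ha, hd]; linear_combination (1:ℤ) * hB'
  exact_mod_cast h2

def condE (p N j : ℕ) : Prop := 1 ≤ ((j+2)*p) % N ∧ ((j+2)*p) % N ≤ p
def condO (p N j : ℕ) : Prop := ((j+2)*p) % N < p

theorem coreE (P Q R S t : ℕ) (hR : R = P + Q) (hS : S = Q + R) (hP : 1 ≤ P) (hQ : 2 ≤ Q)
    (hid : Q * R = P * S + 1) (ht2 : 2 ≤ t) (htR : t ≤ R + 1) :
    (1 ≤ (t*Q) % S ∧ (t*Q) % S ≤ Q) ↔ (t*P) % R < P := by
  have hRpos : 0 < R := by omega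
  have hSpos : 0 < S := by omega
  set m1 := (t*P)/R with hm1
  set r := (t*P) % R with hr
  have hdiv : R * m1 + r = t*P := Nat.div_add_mod (t*P) R
  have hrR : r < R := Nat.mod_lt _ hRpos
  have key : R * (t*Q) = R * (m1*S) + (r*S + t) := by
    have e1 : R * (t*Q) = t * (Q*R) := by ring
    rw [e1, hid]
    calc t * (P*S + 1) = (t*P)*S + t := by ring
    _ = (R*m1 + r)*S + t := by rw [hdiv]
    _ = R * (m1*S) + (r*S + t) := by ring
  have hle : m1 * S ≤ t * Q := by
    have h1 : R*(m1*S) ≤ R*(t*Q) := by omega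
    exact Nat.le_of_mul_le_mul_left h1 hRpos
  obtain ⟨X, hXdef⟩ : ∃ X, t*Q = m1*S + X := ⟨t*Q - m1*S, (Nat.add_sub_cancel' hle).symm⟩
  have hXR : R * X = r*S + t := by
    rw [hXdef, Nat.mul_add] at key
    omega
  have hXltS : X < S := by
    have h1 : R*X < R*S := by
      have h2 : (r+1)*S ≤ R*S := Nat.mul_le_mul_right S (by omega)
      have h3 : (r+1)*S = r*S + S := by ring
      omega
    exact lt_of_mul_lt_mul_left h1 (Nat.zero_le R)
  have hmod : (t*Q) % S = X := by
    rw [hXdef, Nat.add_comm, Nat.add_mul_mod_self_right]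
    exact Nat.mod_eq_of_lt hXltS
  rw [hmod]
  constructor
  · rintro ⟨h1, h2⟩
    by_contra hcon
    push_neg at hcon
    have h4 : P*S ≤ r*S := Nat.mul_le_mul_right S hcon
    have h5 : R*X ≤ R*Q := Nat.mul_le_mul_left R h2
    have h6 : R*Q = Q*R := by ring
    omega
  · intro hrP
    constructor
    · rcases Nat.eq_zero_or_pos X with h0 | h1
      · rw [h0, Nat.mul_zero] at hXR
        obtain ⟨-, h⟩ := (Nat.add_eq_zero).mp hXR.symm
        omega
      · exact h1
    · have h2 : (r+1)*S ≤ P*S := Nat.mul_le_mul_right S (by omega)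
      have h3 : (r+1)*S = r*S + S := by ring
      have h1 : R*X < R*Q := by
        have h6 : R*Q = Q*R := by ring
        omega
      exact le_of_lt (lt_of_mul_lt_mul_left h1 (Nat.zero_le R))

theorem coreO_aux (P Q R S t m1 r : ℕ) (hR : R = P + Q) (hS : S = Q + R) (hP : 1 ≤ P) (hQ : 2 ≤ Q)
    (hid : P * S = Q * R + 1) (ht2 : 2 ≤ t) (htR : t ≤ R + 1)
    (hdiv : R * m1 + r = t * P) (hrR : r < R) :
    (t*Q) % S < Q ↔ (1 ≤ r ∧ r ≤ P) := by
  have hRpos : 0 < R := by omega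
  have hSpos : 0 < S := by omega
  have key : R * (m1*S) + r*S = R * (t*Q) + t := by
    have e1 : R * (m1*S) + r*S = (R*m1 + r)*S := by ring
    rw [e1, hdiv]
    calc (t*P)*S = t*(P*S) := by ring
    _ = t*(Q*R+1) := by rw [hid]
    _ = R*(t*Q) + t := by ring
  rcases Nat.eq_zero_or_pos r with hr0 | hr1
  · -- r = 0 : then R ∣ t, so t = R; both sides false
    subst hr0
    have hsub : R * (m1*S) - R * (t*Q) = R * (m1*S - t*Q) := (Nat.mul_sub R _ _).symm
    have ht' : t = R * (m1*S - t*Q) := by omega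
    have htR' : t = R := by
      obtain ⟨D, hD⟩ : ∃ D, D = m1*S - t*Q := ⟨_, rfl⟩
      rw [← hD] at ht'
      rcases D with _ | D
      · simp at ht'; omega
      · rcases D with _ | D
        · simpa using ht'
        · have h3 : R*(D+1+1) = R*D + 2*R := by ring
          rw [h3] at ht'
          omega
    have h1 : t*Q + 1 = P*S := by
      rw [htR']
      have : R*Q = Q*R := by ring
      omega
    obtain ⟨P0, rfl⟩ : ∃ P0, P = P0 + 1 := ⟨P - 1, by omega⟩
    have h2 : t*Q = S*P0 + (S-1) := by
      have h3 : (P0+1)*S = S*P0 + S := by ring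
      omega
    have hmod : (t*Q) % S = S - 1 := by
      rw [h2, Nat.mul_add_mod]
      exact Nat.mod_eq_of_lt (by omega)
    rw [hmod]
    constructor
    · intro h; omega
    · intro h; omega
  · -- r ≥ 1
    have hle : m1 * S ≤ t * Q := by
      have h0 : t < r * S := by
        have h00 : r*1 ≤ r*S := Nat.mul_le_mul_left r (by omega)
        have h01 : 1*S ≤ r*S := Nat.mul_le_mul_right S (by omega)
        omega
      have h1 : R*(m1*S) ≤ R*(t*Q) := by omega
      exact Nat.le_of_mul_le_mul_left h1 hRpos
    obtain ⟨X, hXdef⟩ : ∃ X, t*Q = m1*S + X := ⟨t*Q - m1*S, (Nat.add_sub_cancel' hle).symm⟩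
    have hXR : R * X + t = r*S := by
      rw [hXdef, Nat.mul_add] at key
      omega
    have hXltS : X < S := by
      have h1 : R*X < R*S := by
        have h2 : r*S ≤ R*S := Nat.mul_le_mul_right S (by omega)
        omega
      exact lt_of_mul_lt_mul_left h1 (Nat.zero_le R)
    have hmod : (t*Q) % S = X := by
      rw [hXdef, Nat.add_comm, Nat.add_mul_mod_self_right]
      exact Nat.mod_eq_of_lt hXltS
    rw [hmod]
    constructor
    · intro hXQ
      refine ⟨hr1, ?_⟩
      by_contra hcon
      push_neg at hcon
      have h4 : (P+1)*S ≤ r*S := Nat.mul_le_mul_right S (by omega)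
      have h5 : (P+1)*S = P*S + S := by ring
      have h8 : R*X < R*Q := Nat.mul_lt_mul_of_le_of_lt (le_refl R) hXQ hRpos
      have h6 : R*Q = Q*R := by ring
      omega
    · rintro ⟨-, hrP⟩
      have h4 : r*S ≤ P*S := Nat.mul_le_mul_right S hrP
      have h1 : R*X < R*Q := by
        have h6 : R*Q = Q*R := by ring
        omega
      exact lt_of_mul_lt_mul_left h1 (Nat.zero_le R)

theorem coreO (P Q R S t : ℕ) (hR : R = P + Q) (hS : S = Q + R) (hP : 1 ≤ P) (hQ : 2 ≤ Q)
    (hid : P * S = Q * R + 1) (ht2 : 2 ≤ t) (htR : t ≤ R + 1) :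
    (t*Q) % S < Q ↔ (1 ≤ (t*P) % R ∧ (t*P) % R ≤ P) :=
  coreO_aux P Q R S t ((t*P)/R) ((t*P)%R) hR hS hP hQ hid ht2 htR
    (Nat.div_add_mod (t*P) R) (Nat.mod_lt _ (by omega))

theorem coprime_of_idE (P Q R S : ℕ) (hid : Q * R = P * S + 1) : Nat.Coprime S Q := by
  have hg1 : Nat.gcd S Q ∣ Q * R := (Nat.gcd_dvd_right S Q).mul_right R
  have hg2 : Nat.gcd S Q ∣ P * S := (Nat.gcd_dvd_left S Q).mul_left P
  rw [hid] at hg1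
  exact Nat.dvd_one.mp ((Nat.dvd_add_right hg2).mp hg1)

theorem coprime_of_idO (P Q R S : ℕ) (hid : P * S = Q * R + 1) : Nat.Coprime S Q := by
  have hg1 : Nat.gcd S Q ∣ Q * R := (Nat.gcd_dvd_right S Q).mul_right R
  have hg2 : Nat.gcd S Q ∣ P * S := (Nat.gcd_dvd_left S Q).mul_left P
  rw [hid] at hg2
  exact Nat.dvd_one.mp ((Nat.dvd_add_right hg1).mp hg2)

theorem y_ne (P Q R S t' : ℕ) (hR : R = P + Q) (hS : S = Q + R) (hP : 1 ≤ P) (hQ : 2 ≤ Q)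
    (hcop : Nat.Coprime S Q) (ht2 : 2 ≤ t') (hub : t' ≤ Q + 1) :
    (t'*Q) % S ≠ 0 ∧ (t'*Q) % S ≠ Q := by
  constructor
  · intro h
    have hd : S ∣ t' := hcop.dvd_of_dvd_mul_right (Nat.dvd_of_mod_eq_zero h)
    have := Nat.le_of_dvd (by omega) hd
    omega
  · intro h
    have heq : S * ((t'*Q)/S) + Q = t'*Q := by
      have := Nat.div_add_mod (t'*Q) S
      omega
    have hsub : (t'-1)*Q = t'*Q - 1*Q := Nat.sub_mul t' 1 Q
    have hd : S ∣ (t'-1)*Q := ⟨(t'*Q)/S, by omega⟩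
    have hd2 : S ∣ t'-1 := hcop.dvd_of_dvd_mul_right hd
    have := Nat.le_of_dvd (by omega) hd2
    omega

theorem shiftE (P Q R S t' : ℕ) (hR : R = P + Q) (hS : S = Q + R) (hP : 1 ≤ P) (hQ : 2 ≤ Q)
    (hid : Q * R = P * S + 1) (ht2 : 2 ≤ t') (hub : t' ≤ Q + 1) :
    (1 ≤ ((t'+R)*Q) % S ∧ ((t'+R)*Q) % S ≤ Q) ↔ (1 ≤ (t'*Q) % S ∧ (t'*Q) % S ≤ Q) := by
  obtain ⟨hy0, hyQ⟩ := y_ne P Q R S t' hR hS hP hQ (coprime_of_idE P Q R S hid) ht2 hub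
  have hyS : (t'*Q) % S < S := Nat.mod_lt _ (by omega)
  have heq : S * ((t'*Q)/S) + (t'*Q) % S = t'*Q := Nat.div_add_mod (t'*Q) S
  have e1 : (t'+R)*Q = t'*Q + (P*S + 1) := by rw [← hid]; ring
  have e3 : S*((t'*Q)/S + P) = S*((t'*Q)/S) + P*S := by ring
  have e2 : (t'+R)*Q = S*((t'*Q)/S + P) + ((t'*Q) % S + 1) := by omega
  have hval : ((t'+R)*Q) % S = ((t'*Q) % S + 1) % S := by
    rw [e2, Nat.mul_add_mod]
  have hif : ((t'*Q) % S + 1) % S = if (t'*Q) % S + 1 = S then 0 else (t'*Q) % S + 1 := by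
    split
    · rename_i h; rw [h]; exact Nat.mod_self S
    · exact Nat.mod_eq_of_lt (by omega)
  rw [hval, hif]
  split <;> omega

theorem shiftO (P Q R S t' : ℕ) (hR : R = P + Q) (hS : S = Q + R) (hP : 1 ≤ P) (hQ : 2 ≤ Q)
    (hid : P * S = Q * R + 1) (ht2 : 2 ≤ t') (hub : t' ≤ Q + 1) :
    (((t'+R)*Q) % S < Q) ↔ ((t'*Q) % S < Q) := by
  obtain ⟨hy0, hyQ⟩ := y_ne P Q R S t' hR hS hP hQ (coprime_of_idO P Q R S hid) ht2 hub
  have hyS : (t'*Q) % S < S := Nat.mod_lt _ (by omega)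
  have heq : S * ((t'*Q)/S) + (t'*Q) % S = t'*Q := Nat.div_add_mod (t'*Q) S
  have e1 : (t'+R)*Q + 1 = t'*Q + P*S := by rw [hid]; ring
  have e3 : S*((t'*Q)/S + P) = S*((t'*Q)/S) + P*S := by ring
  have e2 : (t'+R)*Q = S*((t'*Q)/S + P) + ((t'*Q) % S - 1) := by omega
  have hval : ((t'+R)*Q) % S = (t'*Q) % S - 1 := by
    rw [e2, Nat.mul_add_mod]
    exact Nat.mod_eq_of_lt (by omega)
  rw [hval]
  omega

theorem mech : ∀ n, ∀ j (hj : j < (fw (n+2)).length),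
    ((fw (n+2))[j] = lb ↔
      if n % 2 = 0 then condE (fib n) (fib (n+2)) j else condO (fib n) (fib (n+2)) j) := by
  intro n
  induction n using Nat.twoStepInduction with
  | zero =>
      intro j hj
      have hj2 : j < 2 := by simpa [fw] using hj
      interval_cases j <;> simp [fw, condE, condO, fib, lb] <;> decide
  | one =>
      intro j hj
      have hj2 : j < 3 := by simpa [fw] using hj
      interval_cases j <;> simp [fw, condE, condO, fib, lb] <;> decide
  | more n _ih1 ih2 =>
      intro j hj
      have IH : ∀ i (h : i < (fw (n+3)).length),
          ((fw (n+3))[i] = lb ↔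
            if (n+1) % 2 = 0 then condE (fib (n+1)) (fib (n+3)) i
            else condO (fib (n+1)) (fib (n+3)) i) := ih2
      have hl4 : (fw (n+4)).length = fib (n+4) := flen (n+4)
      have hl3 : (fw (n+3)).length = fib (n+3) := flen (n+3)
      have hl2 : (fw (n+2)).length = fib (n+2) := flen (n+2)
      have hf4 : fib (n+4) = fib (n+3) + fib (n+2) := fib_add_two (n+2)
      have hf3 : fib (n+3) = fib (n+2) + fib (n+1) := fib_add_two (n+1)
      have hp1 : 1 ≤ fib (n+1) := fib_pos _
      have hq2 : 2 ≤ fib (n+2) := fib_two_le n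
      have hsplit : fw (n+4) = fw (n+3) ++ fw (n+2) := rfl
      have hj4 : j < fib (n+4) := by
        have : j < (fw (n+4)).length := hj
        omega
      show (fw (n+4))[j]'hj = lb ↔
        if (n+2) % 2 = 0 then condE (fib (n+2)) (fib (n+4)) j
        else condO (fib (n+2)) (fib (n+4)) j
      rcases Nat.lt_or_ge j (fib (n+3)) with hcase | hcase
      · -- first half : j < fib (n+3)
        have hjl : j < (fw (n+3)).length := by omega
        have e1 : (fw (n+4))[j]'hj = (fw (n+3))[j]'hjl := by
          simp only [hsplit]
          exact List.getElem_append_left hjl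
        rw [e1, IH j hjl]
        rcases Nat.even_or_odd n with he | ho
        · have h0 : n % 2 = 0 := Nat.even_iff.mp he
          rw [if_neg (by omega : ¬ (n+1) % 2 = 0), if_pos (by omega : (n+2) % 2 = 0)]
          obtain ⟨a, ha⟩ : ∃ a, n = 2*a := ⟨n/2, by omega⟩
          have hid0 := dOc_even a
          rw [show 2*a+3 = n+3 from by omega, show 2*a+2 = n+2 from by omega,
              show 2*a+1 = n+1 from by omega, show 2*a+4 = n+4 from by omega] at hid0
          have hcore := coreE (fib (n+1)) (fib (n+2)) (fib (n+3)) (fib (n+4)) (j+2)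
            (by omega) (by omega) hp1 hq2 (by rw [Nat.mul_comm]; exact hid0)
            (by omega) (by omega)
          exact hcore.symm
        · have h0 : n % 2 = 1 := Nat.odd_iff.mp ho
          rw [if_pos (by omega : (n+1) % 2 = 0), if_neg (by omega : ¬ (n+2) % 2 = 0)]
          obtain ⟨a, ha⟩ : ∃ a, n = 2*a+1 := ⟨n/2, by omega⟩
          have hid0 := dOc_odd a
          rw [show 2*a+2 = n+1 from by omega, show 2*a+5 = n+4 from by omega,
              show 2*a+4 = n+3 from by omega, show 2*a+3 = n+2 from by omega] at hid0
          have hcore := coreO (fib (n+1)) (fib (n+2)) (fib (n+3)) (fib (n+4)) (j+2)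
            (by omega) (by omega) hp1 hq2 (by rw [hid0, Nat.mul_comm]) (by omega) (by omega)
          exact hcore.symm
      · -- second half : fib (n+3) ≤ j
        have hj2 : j - fib (n+3) < fib (n+2) := by omega
        have hjl2 : j - fib (n+3) < (fw (n+2)).length := by omega
        have hjl3 : j - fib (n+3) < (fw (n+3)).length := by omega
        have e1 : (fw (n+4))[j]'hj = (fw (n+2))[j - fib (n+3)]'hjl2 := by
          simp only [hsplit]
          rw [List.getElem_append_right (by omega : (fw (n+3)).length ≤ j)]
          simp only [hl3]
        have e2 : (fw (n+2))[j - fib (n+3)]'hjl2 = (fw (n+3))[j - fib (n+3)]'hjl3 :=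
          (List.getElem_append_left (bs := fw (n+1)) hjl2).symm
        rw [e1, e2, IH (j - fib (n+3)) hjl3]
        rcases Nat.even_or_odd n with he | ho
        · have h0 : n % 2 = 0 := Nat.even_iff.mp he
          rw [if_neg (by omega : ¬ (n+1) % 2 = 0), if_pos (by omega : (n+2) % 2 = 0)]
          obtain ⟨a, ha⟩ : ∃ a, n = 2*a := ⟨n/2, by omega⟩
          have hid0 := dOc_even a
          rw [show 2*a+3 = n+3 from by omega, show 2*a+2 = n+2 from by omega,
              show 2*a+1 = n+1 from by omega, show 2*a+4 = n+4 from by omega] at hid0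
          have hcore := coreE (fib (n+1)) (fib (n+2)) (fib (n+3)) (fib (n+4)) (j - fib (n+3) + 2)
            (by omega) (by omega) hp1 hq2 (by rw [Nat.mul_comm]; exact hid0)
            (by omega) (by omega)
          have hshift := shiftE (fib (n+1)) (fib (n+2)) (fib (n+3)) (fib (n+4)) (j - fib (n+3) + 2)
            (by omega) (by omega) hp1 hq2 (by rw [Nat.mul_comm]; exact hid0)
            (by omega) (by omega)
          rw [show j - fib (n+3) + 2 + fib (n+3) = j + 2 from by omega] at hshift
          exact (hcore.symm).trans hshift.symm
        · have h0 : n % 2 = 1 := Nat.odd_iff.mp ho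
          rw [if_pos (by omega : (n+1) % 2 = 0), if_neg (by omega : ¬ (n+2) % 2 = 0)]
          obtain ⟨a, ha⟩ : ∃ a, n = 2*a+1 := ⟨n/2, by omega⟩
          have hid0 := dOc_odd a
          rw [show 2*a+2 = n+1 from by omega, show 2*a+5 = n+4 from by omega,
              show 2*a+4 = n+3 from by omega, show 2*a+3 = n+2 from by omega] at hid0
          have hcore := coreO (fib (n+1)) (fib (n+2)) (fib (n+3)) (fib (n+4)) (j - fib (n+3) + 2)
            (by omega) (by omega) hp1 hq2 (by rw [hid0, Nat.mul_comm]) (by omega) (by omega)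
          have hshift := shiftO (fib (n+1)) (fib (n+2)) (fib (n+3)) (fib (n+4)) (j - fib (n+3) + 2)
            (by omega) (by omega) hp1 hq2 (by rw [hid0, Nat.mul_comm]) (by omega) (by omega)
          rw [show j - fib (n+3) + 2 + fib (n+3) = j + 2 from by omega] at hshift
          exact (hcore.symm).trans hshift.symm

theorem lex_of_getElem? : ∀ (t : ℕ) (u w : List Bool),
    (∀ m, m < t → u[m]? = w[m]?) → u[t]? = some false → w[t]? = some true →
    List.Lex (· < ·) u w := by
  intro t
  induction t with
  | zero =>
      intro u w _ hu hw
      cases u with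
      | nil => simp at hu
      | cons a u' =>
          cases w with
          | nil => simp at hw
          | cons b w' =>
              simp at hu hw
              subst hu; subst hw
              exact List.Lex.rel (by decide)
  | succ t ih =>
      intro u w hpre hu hw
      cases u with
      | nil => simp at hu
      | cons a u' =>
          cases w with
          | nil => simp at hw
          | cons b w' =>
              have h0 := hpre 0 (Nat.succ_pos t)
              simp at h0
              subst h0
              apply List.Lex.cons
              apply ih u' w'
              · intro m hm
                have := hpre (m+1) (by omega)
                simpa using this
              · simpa using hu
              · simpa using hw

theorem getElem?_rot (v : List Bool) (L i m : ℕ) (hlen : v.length = L + 1) (hm : m ≤ L) :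
    (v.rotate i)[m]? = v[(m + i) % (L+1)]? := by
  have h1 : m < (v.rotate i).length := by rw [List.length_rotate, hlen]; omega
  have h2 : (m + i) % (L+1) < L + 1 := Nat.mod_lt _ (by omega)
  rw [List.getElem?_eq_getElem h1, List.getElem_rotate,
    List.getElem?_eq_getElem (by rw [hlen]; exact h2)]
  simp only [hlen]

theorem rot_lt (v : List Bool) (L : ℕ) (hlen : v.length = L+1) (i i' t : ℕ)
    (ht : t ≤ L)
    (hpre : ∀ m, m < t → v[(m + i) % (L+1)]? = v[(m + i') % (L+1)]?)
    (ha : v[(t + i) % (L+1)]? = some false) (hb : v[(t + i') % (L+1)]? = some true) :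
    v.rotate i < v.rotate i' := by
  have hlex : List.Lex (· < ·) (v.rotate i) (v.rotate i') := by
    apply lex_of_getElem? t
    · intro m hm
      rw [getElem?_rot v L i m hlen (by omega), getElem?_rot v L i' m hlen (by omega)]
      exact hpre m hm
    · rw [getElem?_rot v L i t hlen ht]; exact ha
    · rw [getElem?_rot v L i' t hlen ht]; exact hb
  exact hlex

theorem sortedRotations_eq (w : Word) (Lst : List Word)
    (hperm : (rotations w).Perm Lst) (hsort : List.Pairwise (· ≤ ·) Lst) :
    sortedRotations w = Lst :=
  List.Perm.eq_of_pairwise' (List.pairwise_insertionSort _ _) hsort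
    ((List.perm_insertionSort _ _).trans hperm)

theorem lastrot (v : List Bool) (L i : ℕ) (hlen : v.length = L+1) :
    (v.rotate i).getLastD la = ((v[(L + i) % (L+1)]?).getD la) := by
  have hne : v.rotate i ≠ [] := by
    intro h
    have h2 := List.length_rotate v i
    rw [h, hlen] at h2
    simp at h2
  rw [List.getLastD_eq_getLast?, List.getLast?_eq_getElem?]
  have h3 : (v.rotate i).length - 1 = L := by rw [List.length_rotate, hlen]; omega
  rw [h3, getElem?_rot v L i L hlen (le_refl L)]

theorem ydvd (p N c q x : ℕ) (hqp : q*p = c*N + 1) (hx : N ∣ x * p) : N ∣ x := by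
  have h2 : N ∣ (x*p)*q := hx.mul_right q
  rw [show (x*p)*q = x*c*N + x from by
    rw [show (x*p)*q = x*(q*p) from by ring, hqp]; ring] at h2
  exact (Nat.dvd_add_right ⟨x*c, by ring⟩).mp h2

theorem yzero (p N c q x : ℕ) (hqp : q*p = c*N + 1) :
    ((x*p) % N = 0) ↔ N ∣ x := by
  constructor
  · intro h
    exact ydvd p N c q x hqp (Nat.dvd_of_mod_eq_zero h)
  · rintro ⟨d, rfl⟩
    rw [show N*d*p = N*(d*p) from by ring]
    exact Nat.mul_mod_right N _

theorem ypeq (p q N c x : ℕ) (hqp : q*p = c*N + 1) (hpN : p < N) :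
    (((x+1)*p) % N = p) ↔ N ∣ x := by
  constructor
  · intro h
    have hmeq : (x+1)*p ≡ p [MOD N] := by
      unfold Nat.ModEq
      rw [h, Nat.mod_eq_of_lt hpN]
    have hd : N ∣ (x+1)*p - p := (Nat.modEq_iff_dvd' (Nat.le_mul_of_pos_left p (by omega))).mp hmeq.symm
    rw [show (x+1)*p - p = x*p from by
      have e : (x+1)*p = x*p + p := by ring
      omega] at hd
    exact ydvd p N c q x hqp hd
  · rintro ⟨d, rfl⟩
    rw [show (N*d+1)*p = p + N*(d*p) from by ring, Nat.add_mul_mod_self_left]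
    exact Nat.mod_eq_of_lt hpN

theorem yshift (p q N c x : ℕ) (hqp : q*p = c*N + 1) :
    ((x + q + 2)*p) % N = (((x+2)*p) % N + 1) % N := by
  have e : (x+q+2)*p = ((x+2)*p + 1) + c*N := by
    have e0 : (x+q+2)*p = (x+2)*p + q*p := by ring
    omega
  rw [e, Nat.add_mul_mod_self_right, ← Nat.mod_add_mod]

theorem ypred (p q N c f x : ℕ) (hpp : p*p + 1 = f*N) :
    ((((x + p + 2)*p) % N) + 1) % N = ((x+2)*p) % N := by
  have e : (x+p+2)*p + 1 = (x+2)*p + f*N := by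
    have e0 : (x+p+2)*p + 1 = (x+2)*p + (p*p + 1) := by ring
    omega
  rw [Nat.mod_add_mod, e, Nat.add_mul_mod_self_right]

theorem eqletter (v : List Bool) (p q N : ℕ) (hlen : v.length = N+1)
    (hN : N = q + p) (hp : 2 ≤ p) (hq : 3 ≤ q)
    (hletter : ∀ x, x ≤ N →
      (v[x]? = some true ↔ (x = N ∨ (1 ≤ ((x+2)*p) % N ∧ ((x+2)*p) % N ≤ p))))
    (α β : ℕ) (hα : α < N) (hβ : β < N)
    (hyb : ((β+2)*p) % N = (((α+2)*p) % N + 1) % N)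
    (h0 : ((α+2)*p) % N ≠ 0) (hpne : ((α+2)*p) % N ≠ p) : v[α]? = v[β]? := by
  have hαget : α < v.length := by omega
  have hβget : β < v.length := by omega
  have hA := hletter α (by omega)
  have hB := hletter β (by omega)
  rw [List.getElem?_eq_getElem hαget] at hA ⊢
  rw [List.getElem?_eq_getElem hβget] at hB ⊢
  simp only [Option.some.injEq] at hA hB
  have hyαlt : ((α+2)*p) % N < N := Nat.mod_lt _ (by omega)
  have hif : (((α+2)*p) % N + 1) % N
      = if ((α+2)*p) % N + 1 = N then 0 else ((α+2)*p) % N + 1 := by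
    split
    · rename_i h; rw [h]; exact Nat.mod_self N
    · exact Nat.mod_eq_of_lt (by omega)
  by_cases hw : ((α+2)*p) % N + 1 = N
  · rw [if_pos hw] at hif
    rw [hif] at hyb
    have hgoal : (v[α]'hαget = true) ↔ (v[β]'hβget = true) := by
      rw [hA, hB]; omega
    exact congrArg some (Bool.eq_iff_iff.mpr hgoal)
  · rw [if_neg hw] at hif
    rw [hif] at hyb
    have hgoal : (v[α]'hαget = true) ↔ (v[β]'hβget = true) := by
      rw [hA, hB]; omega
    exact congrArg some (Bool.eq_iff_iff.mpr hgoal)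


def HLet (v : List Bool) (p N : ℕ) : Prop :=
  ∀ x, x ≤ N → (v[x]? = some true ↔ (x = N ∨ (1 ≤ ((x+2)*p) % N ∧ ((x+2)*p) % N ≤ p)))

theorem letterfalse (v : List Bool) (p N : ℕ) (hlen : v.length = N+1)
    (hletter : HLet v p N) (x : ℕ) (hx : x < N)
    (hcond : ¬(1 ≤ ((x+2)*p) % N ∧ ((x+2)*p) % N ≤ p)) : v[x]? = some false := by
  have h := hletter x (le_of_lt hx)
  have hxl : x < v.length := by omega
  rw [List.getElem?_eq_getElem hxl] at h ⊢
  simp only [Option.some.injEq] at h ⊢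
  rcases Bool.eq_false_or_eq_true (v[x]'hxl) with hb | hb
  · exfalso
    rcases h.mp hb with h1 | h1
    · omega
    · exact hcond h1
  · exact hb

theorem lettertrue (v : List Bool) (p N : ℕ) (hletter : HLet v p N) (x : ℕ) (hx : x < N)
    (hcond : 1 ≤ ((x+2)*p) % N ∧ ((x+2)*p) % N ≤ p) : v[x]? = some true :=
  (hletter x (le_of_lt hx)).mpr (Or.inr hcond)

theorem caseA (v : List Bool) (p q N c f : ℕ)
    (hlen : v.length = N+1) (hN : N = q + p) (hp : 2 ≤ p) (hq : 3 ≤ q) (hpq : p < q)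
    (hqp : q*p = c*N + 1) (hpp : p*p + 1 = f*N) (hletter : HLet v p N)
    (i : ℕ) (hi : i + 2 ≤ p) :
    v.rotate i < v.rotate (i + q) := by
  apply rot_lt v N hlen i (i+q) (p - i) (by omega)
  · intro m hm
    rw [Nat.mod_eq_of_lt (by omega : m + i < N+1),
      Nat.mod_eq_of_lt (by omega : m + (i+q) < N+1),
      show m + (i+q) = (m+i) + q from by omega]
    apply eqletter v p q N hlen hN hp hq hletter (m+i) (m+i+q) (by omega) (by omega)
    · rw [show m+i+q+2 = (m+i) + q + 2 from by omega]
      exact yshift p q N c (m+i) hqp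
    · intro h
      have hd : N ∣ m+i+2 := (yzero p N c q (m+i+2) hqp).mp h
      have := Nat.le_of_dvd (by omega) hd
      omega
    · intro h
      have hd : N ∣ m+i+1 := (ypeq p q N c (m+i+1) hqp (by omega)).mp
        (by rw [show m+i+1+1 = m+i+2 from by omega]; exact h)
      have := Nat.le_of_dvd (by omega) hd
      omega
  · rw [show p - i + i = p from by omega, Nat.mod_eq_of_lt (by omega)]
    apply letterfalse v p N hlen hletter p (by omega)
    have hy : ((p+2)*p) % N = 2*p - 1 := by
      have e : (p+2)*p = (2*p-1) + f*N := by
        have e0 : (p+2)*p = p*p + 2*p := by ring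
        omega
      rw [e, Nat.add_mul_mod_self_right]
      exact Nat.mod_eq_of_lt (by omega)
    rw [hy]
    omega
  · rw [show p - i + (i+q) = N from by omega, Nat.mod_eq_of_lt (by omega)]
    exact (hletter N (le_refl N)).mpr (Or.inl rfl)

theorem caseB (v : List Bool) (p q N c f : ℕ)
    (hlen : v.length = N+1) (hN : N = q + p) (hp : 2 ≤ p) (hq : 3 ≤ q) (hpq : p < q)
    (hqp : q*p = c*N + 1) (hpp : p*p + 1 = f*N) (hletter : HLet v p N)
    (i : ℕ) (hip : p ≤ i) (hiN : i ≤ N - 2) :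
    v.rotate i < v.rotate (i - p) := by
  apply rot_lt v N hlen i (i-p) (N - i - 2) (by omega)
  · intro m hm
    rw [Nat.mod_eq_of_lt (by omega : m + i < N+1),
      Nat.mod_eq_of_lt (by omega : m + (i-p) < N+1)]
    apply eqletter v p q N hlen hN hp hq hletter (m+i) (m+(i-p)) (by omega) (by omega)
    · rw [show m+i+2 = (m+(i-p)) + p + 2 from by omega]
      exact (ypred p q N c f (m+(i-p)) hpp).symm
    · intro h
      have hd : N ∣ m+i+2 := (yzero p N c q (m+i+2) hqp).mp h
      have := Nat.le_of_dvd (by omega) hd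
      omega
    · intro h
      have hd : N ∣ m+i+1 := (ypeq p q N c (m+i+1) hqp (by omega)).mp
        (by rw [show m+i+1+1 = m+i+2 from by omega]; exact h)
      have := Nat.le_of_dvd (by omega) hd
      omega
  · rw [show N - i - 2 + i = N - 2 from by omega, Nat.mod_eq_of_lt (by omega)]
    apply letterfalse v p N hlen hletter (N-2) (by omega)
    have hy : ((N-2+2)*p) % N = 0 := by
      rw [show N-2+2 = N from by omega]
      exact Nat.mul_mod_right N p
    rw [hy]
    omega
  · rw [show N - i - 2 + (i - p) = q - 2 from by omega, Nat.mod_eq_of_lt (by omega)]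
    apply lettertrue v p N hletter (q-2) (by omega)
    have hy : ((q-2+2)*p) % N = 1 := by
      rw [show q-2+2 = q from by omega, hqp, Nat.add_comm, Nat.add_mul_mod_self_right]
      exact Nat.mod_eq_of_lt (by omega)
    rw [hy]
    omega

theorem caseS1 (v : List Bool) (p q N c f : ℕ)
    (hlen : v.length = N+1) (hN : N = q + p) (hp : 2 ≤ p) (hq : 3 ≤ q) (hpq : p < q)
    (hqp : q*p = c*N + 1) (hpp : p*p + 1 = f*N) (hletter : HLet v p N) :
    v.rotate (p-1) < v.rotate N := by
  apply rot_lt v N hlen (p-1) N (q-1) (by omega)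
  · intro m hm
    rcases Nat.eq_zero_or_pos m with rfl | hm1
    · simp only [Nat.zero_add]
      rw [Nat.mod_eq_of_lt (by omega : p - 1 < N+1), Nat.mod_eq_of_lt (by omega : N < N+1)]
      have h2 : v[N]? = some true := (hletter N (le_refl N)).mpr (Or.inl rfl)
      have h1 : v[p-1]? = some true := by
        apply lettertrue v p N hletter (p-1) (by omega)
        have hy : ((p-1+2)*p) % N = p - 1 := by
          have e : (p-1+2)*p = (p-1) + f*N := by
            have e0 : (p+1)*p = p*p + p := by ring
            have e1 : p-1+2 = p+1 := by omega
            rw [e1]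
            omega
          rw [e, Nat.add_mul_mod_self_right]
          exact Nat.mod_eq_of_lt (by omega)
        rw [hy]
        omega
      rw [h1, h2]
    · have hmN : (m + N) % (N+1) = m - 1 := by
        rw [show m + N = (N+1) + (m-1) from by omega, Nat.add_mod_left]
        exact Nat.mod_eq_of_lt (by omega)
      rw [Nat.mod_eq_of_lt (by omega : m + (p-1) < N+1), hmN]
      apply eqletter v p q N hlen hN hp hq hletter (m+(p-1)) (m-1) (by omega) (by omega)
      · rw [show m+(p-1)+2 = (m-1) + p + 2 from by omega]
        exact (ypred p q N c f (m-1) hpp).symm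
      · intro h
        have hd : N ∣ m+(p-1)+2 := (yzero p N c q (m+(p-1)+2) hqp).mp h
        have := Nat.le_of_dvd (by omega) hd
        omega
      · intro h
        have hd : N ∣ m+(p-1)+1 := (ypeq p q N c (m+(p-1)+1) hqp (by omega)).mp
          (by rw [show m+(p-1)+1+1 = m+(p-1)+2 from by omega]; exact h)
        have := Nat.le_of_dvd (by omega) hd
        omega
  · rw [show q - 1 + (p-1) = N - 2 from by omega, Nat.mod_eq_of_lt (by omega)]
    apply letterfalse v p N hlen hletter (N-2) (by omega)
    have hy : ((N-2+2)*p) % N = 0 := by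
      rw [show N-2+2 = N from by omega]
      exact Nat.mul_mod_right N p
    rw [hy]
    omega
  · rw [show (q - 1 + N) % (N+1) = q - 2 from by
      rw [show q - 1 + N = (N+1) + (q-2) from by omega, Nat.add_mod_left]
      exact Nat.mod_eq_of_lt (by omega)]
    apply lettertrue v p N hletter (q-2) (by omega)
    have hy : ((q-2+2)*p) % N = 1 := by
      rw [show q-2+2 = q from by omega, hqp, Nat.add_comm, Nat.add_mul_mod_self_right]
      exact Nat.mod_eq_of_lt (by omega)
    rw [hy]
    omega

theorem caseS2 (v : List Bool) (p q N c f : ℕ)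
    (hlen : v.length = N+1) (hN : N = q + p) (hp : 2 ≤ p) (hq : 3 ≤ q) (hpq : p < q)
    (hqp : q*p = c*N + 1) (hpp : p*p + 1 = f*N) (hletter : HLet v p N) :
    v.rotate N < v.rotate (N-1) := by
  apply rot_lt v N hlen N (N-1) 1 (by omega)
  · intro m hm
    have hm0 : m = 0 := by omega
    subst hm0
    simp only [Nat.zero_add]
    rw [Nat.mod_eq_of_lt (by omega : N < N+1), Nat.mod_eq_of_lt (by omega : N - 1 < N+1)]
    have h2 : v[N]? = some true := (hletter N (le_refl N)).mpr (Or.inl rfl)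
    have h1 : v[N-1]? = some true := by
      apply lettertrue v p N hletter (N-1) (by omega)
      have hy : ((N-1+2)*p) % N = p := by
        rw [show N-1+2 = N+1 from by omega,
          show (N+1)*p = p + N*p from by ring, Nat.add_mul_mod_self_left]
        exact Nat.mod_eq_of_lt (by omega)
      rw [hy]
      omega
    rw [h1, h2]
  · rw [show (1 + N) % (N+1) = 0 from by
      rw [show 1 + N = (N+1) + 0 from by omega, Nat.add_mod_left]
      exact Nat.mod_eq_of_lt (by omega)]
    apply letterfalse v p N hlen hletter 0 (by omega)
    have hy : ((0+2)*p) % N = 2*p := by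
      rw [show (0+2)*p = 2*p from by ring]
      exact Nat.mod_eq_of_lt (by omega)
    rw [hy]
    omega
  · rw [show 1 + (N-1) = N from by omega, Nat.mod_eq_of_lt (by omega)]
    exact (hletter N (le_refl N)).mpr (Or.inl rfl)

def gg (q N j : ℕ) : ℕ := ((j+1)*q + (N-1)) % N

theorem gg_lt (q N j : ℕ) (hN : 0 < N) : gg q N j < N := Nat.mod_lt _ hN

theorem gg_val (p q N c j : ℕ) (hqp : q*p = c*N + 1) (hN : 0 < N) :
    ((gg q N j + 1) * p) % N = (j+1) % N := by
  have e0 : (j+1)*q + (N-1) + 1 = (j+1)*q + N := by omega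
  have h2 : (gg q N j + 1) * p ≡ ((j+1)*q + N) * p [MOD N] := by
    have h := (Nat.mod_modEq ((j+1)*q + (N-1)) N).add_right 1
    have h2 := h.mul_right p
    rw [e0] at h2
    exact h2
  rw [h2]
  have e1 : ((j+1)*q + N)*p = (j+1) + N*((j+1)*c + p) := by
    have e2 : ((j+1)*q + N)*p = (j+1)*(q*p) + N*p := by ring
    rw [e2, hqp]; ring
  rw [e1, Nat.add_mul_mod_self_left]

theorem gg_last (q N : ℕ) (hN : 0 < N) : gg q N (N-1) = N - 1 := by
  unfold gg
  rw [show N-1+1 = N from by omega, Nat.mul_add_mod]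
  exact Nat.mod_eq_of_lt (by omega)

theorem gg_p1 (p q N : ℕ) (hN : N = q + p) (hq : 3 ≤ q) (hp : 2 ≤ p) :
    gg q N (N-2) = p - 1 := by
  unfold gg
  have e0 : ((N-2+1)+1)*q = (N-2+1)*q + q := by ring
  have e1 : (N-2+1)+1 = N := by omega
  have e : (N-2+1)*q + (N-1) = N*q + (p-1) := by
    rw [e1] at e0
    omega
  rw [e, Nat.mul_add_mod]
  exact Nat.mod_eq_of_lt (by omega)

theorem gg_step (p q N j : ℕ) (hN : N = q + p) (hq : 1 ≤ q) (hp : 1 ≤ p) :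
    gg q N (j+1) = if gg q N j < p then gg q N j + q else gg q N j + q - N := by
  have hg : ((j+1)*q + (N-1)) % N < N := Nat.mod_lt _ (by omega)
  unfold gg
  have e : (j+1+1)*q + (N-1) = ((j+1)*q + (N-1)) + q := by ring
  rw [e, ← Nat.mod_add_mod]
  split
  · rename_i h
    exact Nat.mod_eq_of_lt (by omega)
  · rename_i h
    rw [Nat.mod_eq_sub_mod (by omega)]
    exact Nat.mod_eq_of_lt (by omega)

theorem gg_ne_last (p q N c j : ℕ) (hqp : q*p = c*N + 1) (hN5 : 5 ≤ N) (hj : j < N-1) :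
    gg q N j ≠ N - 1 := by
  intro h
  have hv := gg_val p q N c j hqp (by omega)
  rw [h, show N-1+1 = N from by omega, Nat.mul_mod_right] at hv
  rw [Nat.mod_eq_of_lt (by omega : j+1 < N)] at hv
  omega

theorem gg_ne_p1 (p q N c f j : ℕ) (hqp : q*p = c*N + 1) (hpp : p*p + 1 = f*N) (hf : 1 ≤ f)
    (hN5 : 5 ≤ N) (hp2 : 2 ≤ p) (hpN : p < N) (hj : j < N-2) : gg q N j ≠ p - 1 := by
  intro h
  have hv := gg_val p q N c j hqp (by omega)
  rw [h, show p-1+1 = p from by omega] at hv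
  have e : p*p = (N-1) + (f-1)*N := by
    have e0 : (f-1+1)*N = (f-1)*N + N := by ring
    rw [show f-1+1 = f from by omega] at e0
    omega
  rw [e, Nat.add_mul_mod_self_right, Nat.mod_eq_of_lt (by omega : N-1 < N),
    Nat.mod_eq_of_lt (by omega : j+1 < N)] at hv
  omega

theorem gg_surj (p q N c : ℕ) (hqp : q*p = c*N + 1) (hN5 : 5 ≤ N) (x : ℕ) (hx : x < N-1) :
    gg q N (((x+1)*p + (N-1)) % N) = x ∧ ((x+1)*p + (N-1)) % N < N - 1 := by
  have hval : gg q N (((x+1)*p + (N-1)) % N) = x := by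
    unfold gg
    have e0 : (x+1)*p + (N-1) + 1 = (x+1)*p + N := by omega
    have h2 : ((((x+1)*p + (N-1)) % N) + 1) * q + (N-1)
        ≡ ((x+1)*p + N) * q + (N-1) [MOD N] := by
      have h := (Nat.mod_modEq ((x+1)*p + (N-1)) N).add_right 1
      have h2 := (h.mul_right q).add_right (N-1)
      rw [e0] at h2
      exact h2
    rw [h2]
    have e1 : ((x+1)*p + N)*q + (N-1) = x + N*((x+1)*c + q + 1) := by
      have e2 : ((x+1)*p + N)*q + (N-1) = (x+1)*(q*p) + N*q + (N-1) := by ring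
      rw [e2, hqp]
      have e3 : (x+1)*(c*N+1) = x + 1 + N*((x+1)*c) := by ring
      rw [e3]
      have e4 : N*((x+1)*c) + N*q + N = N*((x+1)*c + q + 1) := by ring
      omega
    rw [e1, Nat.add_mul_mod_self_left]
    exact Nat.mod_eq_of_lt (by omega)
  refine ⟨hval, ?_⟩
  have hlt : ((x+1)*p + (N-1)) % N < N := Nat.mod_lt _ (by omega)
  rcases Nat.lt_or_ge (((x+1)*p + (N-1)) % N) (N-1) with h | h
  · exact h
  · exfalso
    have he : ((x+1)*p + (N-1)) % N = N - 1 := by omega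
    rw [he, gg_last q N (by omega)] at hval
    omega

theorem vletter (b : ℕ) : HLet (fw (2*b+4) ++ [lb]) (fib (2*b+2)) (fib (2*b+4)) := by
  intro x hx
  have hsl : (fw (2*b+4)).length = fib (2*b+4) := flen _
  rcases Nat.lt_or_ge x (fib (2*b+4)) with hlt | hge
  · have hxl : x < (fw (2*b+4)).length := by omega
    rw [List.getElem?_append_left hxl, List.getElem?_eq_getElem hxl]
    simp only [Option.some.injEq]
    have hm := mech (2*b+2) x hxl
    rw [if_pos (by omega : (2*b+2) % 2 = 0)] at hm
    constructor
    · intro h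
      exact Or.inr (hm.mp h)
    · rintro (h | h)
      · omega
      · exact hm.mpr h
  · have hxN : x = fib (2*b+4) := by omega
    subst hxN
    rw [List.getElem?_append_right (by omega : (fw (2*b+4)).length ≤ fib (2*b+4))]
    rw [show fib (2*b+4) - (fw (2*b+4)).length = 0 from by omega]
    simp

theorem destutter'_replicate (m : ℕ) (x : Bool) (l : List Bool) :
    List.destutter' (· ≠ ·) x (List.replicate m x ++ l) = List.destutter' (· ≠ ·) x l := by
  induction m with
  | zero => rfl
  | succ m ih =>
      rw [List.replicate_succ, List.cons_append, List.destutter'_cons_neg _ (by simp)]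
      exact ih

theorem runs_concrete (p0 q0 : ℕ) :
    runs (List.replicate (p0+1) lb ++ (List.replicate (q0+1) la ++ [lb, la])) = 4 := by
  unfold runs
  have e1 : (List.replicate (p0+1) lb ++ (List.replicate (q0+1) la ++ [lb, la])).destutter (· ≠ ·)
      = List.destutter' (· ≠ ·) lb (List.replicate p0 lb ++ (List.replicate (q0+1) la ++ [lb, la])) := by
    rw [List.replicate_succ, List.cons_append]
    rfl
  rw [e1, destutter'_replicate, List.replicate_succ, List.cons_append,
    List.destutter'_cons_pos _ (by decide), destutter'_replicate,
    List.destutter'_cons_pos _ (by decide), List.destutter'_cons_pos _ (by decide),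
    List.destutter'_nil]
  rfl

theorem main (b : ℕ) :
    bwt (fw (2*b+4) ++ [lb]) =
      List.replicate (fib (2*b+2)) lb ++ List.replicate (fib (2*b+3) - 1) la ++ [lb, la] ∧
    rr (fw (2*b+4) ++ [lb]) = 4 := by
  have hqpc : fib (2*b+3) * fib (2*b+2) = fib (2*b+1) * fib (2*b+4) + 1 := dOc_even b
  have hppf : fib (2*b+2) * fib (2*b+2) + 1 = fib (2*b) * fib (2*b+4) := by
    have h := C2_even b
    rw [pow_two] at h
    omega
  have hNe : fib (2*b+4) = fib (2*b+3) + fib (2*b+2) := fib_add_two (2*b+2)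
  have hqe : fib (2*b+3) = fib (2*b+2) + fib (2*b+1) := fib_add_two (2*b+1)
  have hp2 : 2 ≤ fib (2*b+2) := fib_two_le (2*b)
  have hc1 : 1 ≤ fib (2*b+1) := fib_pos (2*b+1)
  have hf1 : 1 ≤ fib (2*b) := fib_pos (2*b)
  have hlet : HLet (fw (2*b+4) ++ [lb]) (fib (2*b+2)) (fib (2*b+4)) := vletter b
  have hvlen : (fw (2*b+4) ++ [lb]).length = fib (2*b+4) + 1 := by
    rw [List.length_append, flen]
    rfl
  set p := fib (2*b+2) with hpdef
  set q := fib (2*b+3) with hqdef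
  set c := fib (2*b+1) with hcdef
  set f := fib (2*b) with hfdef
  set N := fib (2*b+4) with hNdef
  set v : Word := fw (2*b+4) ++ [lb] with hvdef
  have hNqp : N = q + p := hNe
  have hq3 : 3 ≤ q := by omega
  have hpq : p < q := by omega
  have hN5 : 5 ≤ N := by omega
  have hqp : q*p = c*N + 1 := hqpc
  have hpp : p*p + 1 = f*N := hppf
  set L : List Word :=
    ((List.range (N-1)).map (fun j => v.rotate (gg q N j))) ++ [v.rotate N, v.rotate (N-1)]
    with hLdef
  -- permutation of index lists
  have hIperm : (List.range (N+1)).Perm ((List.range (N-1)).map (gg q N) ++ [N, N-1]) := by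
    have hnodup : ((List.range (N-1)).map (gg q N) ++ [N, N-1]).Nodup := by
      rw [List.nodup_append']
      refine ⟨?_, ?_, ?_⟩
      · apply List.Nodup.map_on ?_ List.nodup_range
        intro x hx y hy hxy
        have hx' := List.mem_range.mp hx
        have hy' := List.mem_range.mp hy
        have h1 := gg_val p q N c x hqp (by omega)
        have h2 := gg_val p q N c y hqp (by omega)
        rw [hxy, h2] at h1
        rw [Nat.mod_eq_of_lt (by omega : y+1 < N), Nat.mod_eq_of_lt (by omega : x+1 < N)] at h1
        omega
      · simp
        omega
      · intro a ha hb
        simp only [List.mem_map, List.mem_range] at ha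
        obtain ⟨x, hx, rfl⟩ := ha
        have hlt := gg_lt q N x (by omega)
        have hne := gg_ne_last p q N c x hqp hN5 hx
        simp only [List.mem_cons, List.mem_singleton, List.not_mem_nil] at hb
        rcases hb with hb | hb | hb
        · omega
        · exact hne hb
        · exact hb
    apply (List.perm_ext_iff_of_nodup List.nodup_range hnodup).mpr
    intro a
    simp only [List.mem_range, List.mem_append, List.mem_map, List.mem_cons,
      List.mem_singleton, List.not_mem_nil, or_false]
    constructor
    · intro ha
      rcases Nat.lt_or_ge a (N-1) with h1 | h1
      · left
        obtain ⟨hval, hlt⟩ := gg_surj p q N c hqp hN5 a h1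
        exact ⟨((a+1)*p + (N-1)) % N, hlt, hval⟩
      · right
        omega
    · intro h
      rcases h with ⟨x, hx, rfl⟩ | h
      · have := gg_lt q N x (by omega)
        omega
      · omega
  have hperm : (rotations v).Perm L := by
    have hrot : rotations v = (List.range (N+1)).map v.rotate := by
      unfold rotations
      rw [hvlen]
    rw [hrot, hLdef]
    have h := hIperm.map v.rotate
    rw [List.map_append, List.map_map] at h
    simpa [Function.comp_def] using h
  -- get formulas
  have hmapl : (List.map (fun j => v.rotate (gg q N j)) (List.range (N-1))).length = N-1 := by
    simp
  have hLlen : L.length = N+1 := by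
    rw [hLdef]
    simp only [List.length_append, List.length_map, List.length_range,
      List.length_cons, List.length_nil]
    omega
  have hgetA : ∀ (i : ℕ) (hi : i < N-1) (h : i < L.length),
      L.get ⟨i, h⟩ = v.rotate (gg q N i) := by
    intro i hi h
    rw [List.get_eq_getElem]
    simp only [hLdef]
    rw [List.getElem_append_left (by rw [hmapl]; omega)]
    rw [List.getElem_map, List.getElem_range]
  have hgetN1 : ∀ (x : ℕ) (hx : x = N-1) (h : x < L.length), L.get ⟨x, h⟩ = v.rotate N := by
    intro x hx h
    subst hx
    rw [List.get_eq_getElem]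
    simp only [hLdef]
    rw [List.getElem_append_right (by rw [hmapl])]
    simp only [hmapl, Nat.sub_self]
    rw [List.getElem_cons_zero]
  have hgetN : ∀ (x : ℕ) (hx : x = N) (h : x < L.length), L.get ⟨x, h⟩ = v.rotate (N-1) := by
    intro x hx h
    subst hx
    rw [List.get_eq_getElem]
    simp only [hLdef]
    rw [List.getElem_append_right (by rw [hmapl]; omega)]
    simp only [hmapl, show N - (N-1) = 1 from by omega]
    rw [List.getElem_cons_succ, List.getElem_cons_zero]
  -- sortedness
  have hsort : List.Pairwise (· ≤ ·) L := by
    have hchain : List.IsChain (· ≤ ·) L := by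
      rw [List.isChain_iff_getElem]
      intro i hi
      show L.get ⟨i, _⟩ ≤ L.get ⟨i+1, hi⟩
      rw [hLlen] at hi
      rcases Nat.lt_or_ge (i+1) (N-1) with h1 | h1
      · rw [hgetA i (by omega) (by omega), hgetA (i+1) h1 (by omega)]
        have hgi : gg q N i < N := gg_lt q N i (by omega)
        have hne1 : gg q N i ≠ N-1 := gg_ne_last p q N c i hqp hN5 (by omega)
        have hnep : gg q N i ≠ p-1 :=
          gg_ne_p1 p q N c f i hqp hpp hf1 hN5 hp2 (by omega) (by omega)
        have hstep := gg_step p q N i hNqp (by omega) (by omega)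
        by_cases hlt : gg q N i < p
        · rw [if_pos hlt] at hstep
          rw [hstep]
          exact le_of_lt (caseA v p q N c f hvlen hNqp hp2 hq3 hpq hqp hpp hlet
            (gg q N i) (by omega))
        · rw [if_neg hlt] at hstep
          rw [hstep, show gg q N i + q - N = gg q N i - p from by omega]
          exact le_of_lt (caseB v p q N c f hvlen hNqp hp2 hq3 hpq hqp hpp hlet
            (gg q N i) (by omega) (by omega))
      · rcases Nat.lt_or_ge (i+1) N with h2 | h2
        · have hieq : i + 1 = N - 1 := by omega
          have hieq' : i = N - 2 := by omega
          rw [hgetA i (by omega) (by omega), hgetN1 (i+1) hieq (by omega)]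
          rw [hieq', gg_p1 p q N hNqp hq3 hp2]
          exact le_of_lt (caseS1 v p q N c f hvlen hNqp hp2 hq3 hpq hqp hpp hlet)
        · have hieq : i + 1 = N := by omega
          have hieq' : i = N - 1 := by omega
          rw [hgetN1 i hieq' (by omega), hgetN (i+1) hieq (by omega)]
          exact le_of_lt (caseS2 v p q N c f hvlen hNqp hp2 hq3 hpq hqp hpp hlet)
    exact List.isChain_iff_pairwise.mp hchain
  have hsr : sortedRotations v = L := sortedRotations_eq v L hperm hsort
  -- the bwt computation
  have hvN1 : v[N-1]? = some true := by
    apply lettertrue v p N hlet (N-1) (by omega)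
    have hy : ((N-1+2)*p) % N = p := by
      rw [show N-1+2 = N+1 from by omega,
        show (N+1)*p = p + N*p from by ring, Nat.add_mul_mod_self_left]
      exact Nat.mod_eq_of_lt (by omega)
    rw [hy]
    omega
  have hvN2 : v[N-2]? = some false := by
    apply letterfalse v p N hvlen hlet (N-2) (by omega)
    have hy : ((N-2+2)*p) % N = 0 := by
      rw [show N-2+2 = N from by omega]
      exact Nat.mul_mod_right N p
    rw [hy]
    omega
  have hbwt : bwt v = List.replicate p lb ++ (List.replicate (q-1) la ++ [lb, la]) := by
    unfold bwt
    rw [hsr, hLdef, List.map_append, List.map_map]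
    have hY : List.map (fun u => u.getLastD la) [v.rotate N, v.rotate (N-1)] = [lb, la] := by
      simp only [List.map_cons, List.map_nil]
      rw [lastrot v N N hvlen, lastrot v N (N-1) hvlen]
      rw [show (N + N) % (N+1) = N-1 from by
        rw [show N+N = (N+1) + (N-1) from by omega, Nat.add_mod_left]
        exact Nat.mod_eq_of_lt (by omega)]
      rw [show (N + (N-1)) % (N+1) = N-2 from by
        rw [show N+(N-1) = (N+1) + (N-2) from by omega, Nat.add_mod_left]
        exact Nat.mod_eq_of_lt (by omega)]
      rw [hvN1, hvN2]
      rfl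
    have hpoint : ∀ j, j < N-1 →
        (v.rotate (gg q N j)).getLastD la = (if j < p then lb else la) := by
      intro j hj
      have hgglt : gg q N j < N := gg_lt q N j (by omega)
      rw [lastrot v N (gg q N j) hvlen]
      rcases Nat.eq_zero_or_pos (gg q N j) with h0 | h1
      · rw [h0, show (N + 0) % (N+1) = N from by
          rw [Nat.add_zero]; exact Nat.mod_eq_of_lt (by omega)]
        have hvN : v[N]? = some true := (hlet N (le_refl N)).mpr (Or.inl rfl)
        rw [hvN]
        have hgv := gg_val p q N c j hqp (by omega)
        rw [h0, show (0+1)*p = p from by ring, Nat.mod_eq_of_lt (by omega : p < N),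
          Nat.mod_eq_of_lt (by omega : j+1 < N)] at hgv
        rw [if_pos (by omega)]
        rfl
      · rw [show (N + gg q N j) % (N+1) = gg q N j - 1 from by
          rw [show N + gg q N j = (N+1) + (gg q N j - 1) from by omega, Nat.add_mod_left]
          exact Nat.mod_eq_of_lt (by omega)]
        have hgv := gg_val p q N c j hqp (by omega)
        rw [Nat.mod_eq_of_lt (by omega : j+1 < N)] at hgv
        by_cases hjp : j < p
        · rw [lettertrue v p N hlet (gg q N j - 1) (by omega) (by
            rw [show gg q N j - 1 + 2 = gg q N j + 1 from by omega, hgv]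
            omega)]
          rw [if_pos hjp]
          rfl
        · rw [letterfalse v p N hvlen hlet (gg q N j - 1) (by omega) (by
            rw [show gg q N j - 1 + 2 = gg q N j + 1 from by omega, hgv]
            omega)]
          rw [if_neg hjp]
          rfl
    have hX : List.map ((fun u => u.getLastD la) ∘ (fun j => v.rotate (gg q N j)))
        (List.range (N-1)) = List.replicate p lb ++ List.replicate (q-1) la := by
      rw [show N - 1 = p + (q-1) from by omega, List.range_add, List.map_append, List.map_map]
      congr 1
      · apply List.eq_replicate_iff.mpr
        refine ⟨by simp, ?_⟩
        intro x hx
        simp only [List.mem_map, List.mem_range] at hx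
        obtain ⟨j, hj, rfl⟩ := hx
        have h := hpoint j (by omega)
        rw [if_pos (by omega)] at h
        exact h
      · apply List.eq_replicate_iff.mpr
        refine ⟨by simp, ?_⟩
        intro x hx
        simp only [List.mem_map, List.mem_range, Function.comp] at hx
        obtain ⟨j, hj, rfl⟩ := hx
        have h := hpoint (p + j) (by omega)
        rw [if_neg (by omega)] at h
        exact h
    rw [hX, hY, List.append_assoc]
  constructor
  · rw [hbwt, List.append_assoc]
  · show runs (bwt v) = 4
    rw [hbwt]
    obtain ⟨p0, hp0⟩ : ∃ p0, p = p0 + 1 := ⟨p-1, by omega⟩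
    obtain ⟨q0, hq0⟩ : ∃ q0, q - 1 = q0 + 1 := ⟨q-2, by omega⟩
    rw [hp0, hq0]
    exact runs_concrete p0 q0

end SAux


open BWT in
/-- for `k ≥ 2`, the Fibonacci-plus word `v = s_{2k}·b` has
`bwt(v) = b^{F_{2k-2}} a^{F_{2k-1}-1} b a`, hence `r(v) = 4`. -/
theorem stmt3 (k : ℕ) (hk : 2 ≤ k) :
    bwt (fw (2*k) ++ [lb]) =
      List.replicate (fib (2*k-2)) lb ++ List.replicate (fib (2*k-1) - 1) la ++ [lb, la] ∧
    rr (fw (2*k) ++ [lb]) = 4 := by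
  obtain ⟨b, rfl⟩ : ∃ b, k = b + 2 := ⟨k - 2, by omega⟩
  have h := SAux.main b
  rw [show 2*(b+2) = 2*b+4 from by omega, show 2*b+4-2 = 2*b+2 from by omega,
    show 2*b+4-1 = 2*b+3 from by omega]
  exact h
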